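/- Let K ⊆ ℝⁿ be a closed convex cone and L a linear subspace with L ⊆ K. Then for every y ∈ ℝⁿ, the projection onto K decomposes as Π_K(y) = Π_{K ∩ L^⊥}(y) + P_L(y), where P_L is the orthogonal projection onto L and Π_C denotes the metric projection onto a closed convex set C. -/

import Mathlib

open scoped RealInnerProductSpace


private lemma proj_VI {F : Type*} [NormedAddCommGroup F] [InnerProductSpace ℝ F]
    {S : Set F} (hS : Convex ℝ S) {u v : F} (hv : v ∈ S)
    (hmin : ∀ x ∈ S, dist u v ≤ dist u x) : ∀ w ∈ S, ⟪u - v, w - v⟫ ≤ 0 := by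
  haveI : Nonempty S := ⟨⟨v, hv⟩⟩
  have hbdd : BddBelow (Set.range fun w : S => ‖u - ↑w‖) := by
    refine ⟨0, ?_⟩
    rintro r ⟨w, rfl⟩
    exact norm_nonneg _
  have hinf : ‖u - v‖ = ⨅ w : S, ‖u - ↑w‖ := by
    apply le_antisymm
    · exact le_ciInf fun w => by simpa [dist_eq_norm] using hmin w w.2
    · exact ciInf_le hbdd (⟨v, hv⟩ : S)
  exact (norm_eq_iInf_iff_real_inner_le_zero hS hv).mp hinf

theorem proj_cone_decomposition (n : ℕ) (K : Set (EuclideanSpace ℝ (Fin n)))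
    (L : Submodule ℝ (EuclideanSpace ℝ (Fin n)))
    (hKclosed : IsClosed K) (hKconvex : Convex ℝ K)
    (hKcone : ∀ c : ℝ, 0 ≤ c → ∀ θ ∈ K, c • θ ∈ K)
    (hLK : (L : Set (EuclideanSpace ℝ (Fin n))) ⊆ K)
    (y p q : EuclideanSpace ℝ (Fin n))
    (hp : p ∈ K) (hpmin : ∀ x ∈ K, dist y p ≤ dist y x)
    (hq : q ∈ K ∩ (Lᗮ : Set (EuclideanSpace ℝ (Fin n))))
    (hqmin : ∀ x ∈ K ∩ (Lᗮ : Set (EuclideanSpace ℝ (Fin n))), dist y q ≤ dist y x) :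
    p = q + (L.orthogonalProjection y : EuclideanSpace ℝ (Fin n)) := by
  -- K is closed under addition
  have hadd : ∀ a ∈ K, ∀ b ∈ K, a + b ∈ K := by
    intro a ha b hb
    have hmid : (1/2 : ℝ) • a + (1/2 : ℝ) • b ∈ K :=
      hKconvex ha hb (a := 1/2) (b := 1/2) (by norm_num) (by norm_num) (by norm_num)
    have := hKcone 2 (by norm_num) _ hmid
    have h2 : (2:ℝ) • ((1/2 : ℝ) • a + (1/2 : ℝ) • b) = a + b := by
      rw [smul_add, smul_smul, smul_smul]; norm_num
    rwa [h2] at this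
  set yL : EuclideanSpace ℝ (Fin n) := (L.orthogonalProjection y : EuclideanSpace ℝ (Fin n)) with hyLdef
  have hyLmem : yL ∈ L := (L.orthogonalProjection y).2
  have hyperp : y - yL ∈ Lᗮ := Submodule.sub_starProjection_mem_orthogonal (K := L) y
  -- variational inequality for p on K
  have hVIp : ∀ w ∈ K, ⟪y - p, w - p⟫ ≤ 0 := proj_VI hKconvex hp hpmin
  -- variational inequality for q on K ∩ L⊥
  have hKLconv : Convex ℝ (K ∩ (Lᗮ : Set (EuclideanSpace ℝ (Fin n)))) := hKconvex.inter (Lᗮ).convex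
  have hVIq : ∀ w ∈ K ∩ (Lᗮ : Set (EuclideanSpace ℝ (Fin n))), ⟪y - q, w - q⟫ ≤ 0 :=
    proj_VI hKLconv hq hqmin
  set z : EuclideanSpace ℝ (Fin n) := q + yL with hzdef
  have hzK : z ∈ K := hadd q hq.1 yL (hLK hyLmem)
  -- variational inequality for z on K
  have hVIz : ∀ x ∈ K, ⟪y - z, x - z⟫ ≤ 0 := by
    intro x hx
    set xL : EuclideanSpace ℝ (Fin n) := (L.orthogonalProjection x : EuclideanSpace ℝ (Fin n)) with hxLdef
    have hxLmem : xL ∈ L := (L.orthogonalProjection x).2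
    have hxperp : x - xL ∈ Lᗮ := Submodule.sub_starProjection_mem_orthogonal (K := L) x
    have hxK : x - xL ∈ K := by
      have : x + (-xL) ∈ K := hadd x hx (-xL) (hLK (neg_mem hxLmem))
      simpa [sub_eq_add_neg] using this
    have hq2 := hVIq (x - xL) ⟨hxK, hxperp⟩
    -- rewrite the inner products
    have e1 : x - z = ((x - xL) - q) + (xL - yL) := by rw [hzdef]; abel
    have e2 : y - z = (y - q) - yL := by rw [hzdef]; abel
    have horth1 : ⟪y - z, xL - yL⟫ = 0 := by
      have hmemL : y - z ∈ Lᗮ := by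
        have : y - z = (y - yL) - q := by rw [hzdef]; abel
        rw [this]; exact Submodule.sub_mem _ hyperp hq.2
      exact Submodule.inner_left_of_mem_orthogonal (Submodule.sub_mem _ hxLmem hyLmem) hmemL
    have horth2 : ⟪yL, (x - xL) - q⟫ = 0 :=
      (Submodule.inner_right_of_mem_orthogonal hyLmem
        (Submodule.sub_mem _ hxperp hq.2))
    calc ⟪y - z, x - z⟫
        = ⟪y - z, (x - xL) - q⟫ + ⟪y - z, xL - yL⟫ := by
          rw [e1, inner_add_right]
      _ = ⟪y - z, (x - xL) - q⟫ := by rw [horth1, add_zero]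
      _ = ⟪y - q, (x - xL) - q⟫ - ⟪yL, (x - xL) - q⟫ := by
          rw [e2, inner_sub_left]
      _ = ⟪y - q, (x - xL) - q⟫ := by rw [horth2, sub_zero]
      _ ≤ 0 := hq2
  -- uniqueness
  have h1 : ⟪y - p, z - p⟫ ≤ 0 := hVIp z hzK
  have h2 : ⟪y - z, p - z⟫ ≤ 0 := hVIz p hp
  have hkey : ⟪p - z, p - z⟫ = ⟪y - z, p - z⟫ + ⟪y - p, z - p⟫ := by
    have e : p - z = (y - z) - (y - p) := by abel
    rw [e, inner_sub_left]
    have : ⟪y - p, (y - z) - (y - p)⟫ = -⟪y - p, z - p⟫ := by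
      have e2 : (y - z) - (y - p) = -(z - p) := by abel
      rw [e2, inner_neg_right]
    rw [this]; ring
  have hle : ⟪p - z, p - z⟫ ≤ 0 := by rw [hkey]; linarith
  have : p - z = 0 := by
    have := le_antisymm hle real_inner_self_nonneg
    exact inner_self_eq_zero.mp this
  exact sub_eq_zero.mp this
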